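/- For every symmetric (permutation-invariant) pure state |ψ⟩ of n qubits, the geometric measure of entanglement satisfies E_G(|ψ⟩) ≤ log₂(n+1). -/

import Mathlib

open Finset

noncomputable def overlap {n : ℕ} (f g : (Fin n → Fin 2) → ℂ) : ℂ :=
  ∑ x : Fin n → Fin 2, (starRingEnd ℂ) (f x) * g x

noncomputable def symmPow (n : ℕ) (σ : Fin 2 → ℂ) : (Fin n → Fin 2) → ℂ :=
  fun x => ∏ i, σ (x i)

noncomputable def prodState {n : ℕ} (σ : Fin n → Fin 2 → ℂ) : (Fin n → Fin 2) → ℂ :=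
  fun x => ∏ j, σ j (x j)

def qubitUnit (σ : Fin 2 → ℂ) : Prop :=
  ‖σ 0‖ ^ 2 + ‖σ 1‖ ^ 2 = 1

noncomputable def dicke (n k : ℕ) : (Fin n → Fin 2) → ℂ :=
  fun x => if (∑ i, ((x i : ℕ))) = k then ((1 / Real.sqrt (n.choose k) : ℝ) : ℂ) else 0

noncomputable def bloch (θ ph : ℝ) : Fin 2 → ℂ :=
  fun i => if i = 0 then ((Real.cos (θ/2) : ℝ) : ℂ)
           else Complex.exp (Complex.I * ph) * ((Real.sin (θ/2) : ℝ) : ℂ)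

def isCPP (n : ℕ) (ψ : (Fin n → Fin 2) → ℂ) (σ : Fin 2 → ℂ) : Prop :=
  qubitUnit σ ∧ ∀ τ, qubitUnit τ →
    ‖overlap (symmPow n τ) ψ‖ ≤ ‖overlap (symmPow n σ) ψ‖


/- ### Auxiliary lemmas ### -/

section Aux

lemma phase_sum (N : ℕ) (hN : 0 < N) (d : ℤ) (hd : d ≠ 0) (hd2 : d.natAbs < N) :
    ∑ j ∈ range N, Complex.exp (Complex.I * (2 * Real.pi * j / N) * d) = 0 := by
  have hNc : (N : ℂ) ≠ 0 := Nat.cast_ne_zero.2 hN.ne'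
  set ζ : ℂ := Complex.exp (Complex.I * (2 * Real.pi / N) * d) with hζ
  have hζN : ζ ^ N = 1 := by
    rw [hζ, ← Complex.exp_nat_mul, Complex.exp_eq_one_iff]
    refine ⟨d, ?_⟩
    field_simp
  have hζ1 : ζ ≠ 1 := by
    intro h
    rw [hζ, Complex.exp_eq_one_iff] at h
    obtain ⟨m, hm⟩ := h
    have hπ : (Real.pi : ℂ) ≠ 0 := Complex.ofReal_ne_zero.2 Real.pi_ne_zero
    have hI : Complex.I ≠ 0 := Complex.I_ne_zero
    have hdm : (d : ℂ) = m * N := by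
      have hc : (2 * (Real.pi:ℂ) * Complex.I) ≠ 0 := by
        simp [hπ, hI]
      have key : (2 * (Real.pi:ℂ) * Complex.I) * ((d:ℂ) / N) = (2 * (Real.pi:ℂ) * Complex.I) * m := by
        calc (2 * (Real.pi:ℂ) * Complex.I) * ((d:ℂ) / N) = Complex.I * (2 * Real.pi / N) * d := by ring
        _ = m * (2 * Real.pi * Complex.I) := hm
        _ = (2 * (Real.pi:ℂ) * Complex.I) * m := by ring
      have hx := mul_left_cancel₀ hc key
      rw [div_eq_iff hNc] at hx
      rw [hx]

    have hdm' : d = m * N := by exact_mod_cast hdm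
    rcases eq_or_ne m 0 with rfl | hm0
    · simp at hdm'; exact hd hdm'
    · have : (N : ℤ) ≤ d.natAbs := by
        rw [hdm']
        calc (N:ℤ) = 1 * N := by ring
        _ ≤ |m| * N := by
          have : (1:ℤ) ≤ |m| := Int.one_le_abs hm0
          exact mul_le_mul_of_nonneg_right this (by positivity)
        _ = |m * N| := by rw [abs_mul]; simp
        _ = (m * N).natAbs := (Int.abs_eq_natAbs _)
      omega
  have hrw : ∀ j : ℕ, Complex.exp (Complex.I * (2 * Real.pi * j / N) * d) = ζ ^ j := by
    intro j
    rw [hζ, ← Complex.exp_nat_mul]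
    ring_nf
  simp only [hrw]
  rw [geom_sum_eq hζ1, hζN]
  simp

lemma prod_shift_factorial (k M : ℕ) :
    k.factorial * ∏ j ∈ range M, (k + 1 + j) = (k + M).factorial := by
  induction M with
  | zero => simp
  | succ M ih =>
    rw [Finset.prod_range_succ, ← mul_assoc, ih]
    rw [show k + (M+1) = (k + M) + 1 by ring, Nat.factorial_succ]
    ring

lemma beta_nat (k m : ℕ) :
    ∫ x in (0:ℝ)..1, x ^ k * (1 - x) ^ m
      = (k.factorial * m.factorial : ℝ) / (k + m + 1).factorial := by
  have h := Complex.betaIntegral_eval_nat_add_one_right (u := ((k:ℂ) + 1))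
    (by simp; positivity) m
  have hL : Complex.betaIntegral ((k:ℂ) + 1) ((m:ℂ) + 1)
      = ((∫ x in (0:ℝ)..1, x ^ k * (1 - x) ^ m : ℝ) : ℂ) := by
    rw [Complex.betaIntegral, ← intervalIntegral.integral_ofReal]
    apply intervalIntegral.integral_congr
    intro x _
    push_cast
    rw [add_sub_cancel_right, add_sub_cancel_right, Complex.cpow_natCast, Complex.cpow_natCast]
  have hprod : ∏ j ∈ range (m + 1), ((k:ℂ) + 1 + j) = ((k + m + 1).factorial : ℂ) / (k.factorial : ℂ) := by
    have := prod_shift_factorial k (m + 1)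
    have hk0 : (k.factorial : ℂ) ≠ 0 := Nat.cast_ne_zero.2 k.factorial_ne_zero
    rw [eq_div_iff hk0, mul_comm]
    calc (k.factorial : ℂ) * ∏ j ∈ range (m+1), ((k:ℂ) + 1 + j)
        = ((k.factorial * ∏ j ∈ range (m+1), (k + 1 + j) : ℕ) : ℂ) := by push_cast; ring
      _ = _ := by rw [this]; norm_cast
  rw [hL, hprod] at h
  have hfac : ((k + m + 1).factorial : ℂ) ≠ 0 := Nat.cast_ne_zero.2 (Nat.factorial_ne_zero _)
  have hk0 : (k.factorial : ℂ) ≠ 0 := Nat.cast_ne_zero.2 k.factorial_ne_zero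
  have : ((∫ x in (0:ℝ)..1, x ^ k * (1 - x) ^ m : ℝ) : ℂ)
      = ((k.factorial * m.factorial : ℝ) / (k + m + 1).factorial : ℝ) := by
    rw [h]
    push_cast
    field_simp
  exact_mod_cast this

lemma fin2_cases (b : Fin 2) : b = 0 ∨ b = 1 := by omega

lemma fin2_cast (b : Fin 2) : (b : ℕ) = if b = 1 then 1 else 0 := by
  rcases fin2_cases b with h | h <;> simp [h]

lemma wt_eq_card {n : ℕ} (y : Fin n → Fin 2) :
    ∑ i, ((y i : ℕ)) = (univ.filter (fun i => y i = 1)).card := by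
  rw [Finset.card_filter]
  exact Finset.sum_congr rfl (fun i _ => fin2_cast (y i))

lemma wt_le {n : ℕ} (y : Fin n → Fin 2) : ∑ i, ((y i : ℕ)) ≤ n := by
  calc ∑ i, ((y i : ℕ)) ≤ ∑ _i : Fin n, 1 := Finset.sum_le_sum (fun i _ => by omega)
  _ = n := by simp

lemma card_wt {n : ℕ} (k : ℕ) :
    (univ.filter (fun y : Fin n → Fin 2 => ∑ i, ((y i : ℕ)) = k)).card = n.choose k := by
  have hb : (univ.filter (fun y : Fin n → Fin 2 => ∑ i, ((y i : ℕ)) = k)).card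
      = (Finset.powersetCard k (univ : Finset (Fin n))).card := by
    apply Finset.card_bij (fun y _ => univ.filter (fun i => y i = 1))
    · intro y hy
      simp only [Finset.mem_filter, Finset.mem_univ, true_and] at hy
      simp only [Finset.mem_powersetCard]
      exact ⟨Finset.filter_subset _ _, by rw [← wt_eq_card]; exact hy⟩
    · intro y hy z hz h
      funext i
      have := Finset.ext_iff.1 h i
      simp only [Finset.mem_filter, Finset.mem_univ, true_and] at this
      rcases fin2_cases (y i) with h1 | h1 <;> rcases fin2_cases (z i) with h2 | h2 <;> simp_all
    · intro s hs
      refine ⟨fun i => if i ∈ s then 1 else 0, ?_, ?_⟩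
      · simp only [Finset.mem_filter, Finset.mem_univ, true_and, Finset.mem_powersetCard] at hs ⊢
        rw [wt_eq_card, ← hs.2]
        congr 1
        ext i
        simp only [Finset.mem_filter, Finset.mem_univ, true_and]
        split <;> simp_all
      · ext i
        simp only [Finset.mem_filter, Finset.mem_univ, true_and]
        split <;> simp_all
  rw [hb, Finset.card_powersetCard, Finset.card_univ, Fintype.card_fin]

lemma orbit_perm {n : ℕ} (y z : Fin n → Fin 2)
    (h : ∑ i, ((y i : ℕ)) = ∑ i, ((z i : ℕ))) :
    ∃ π : Equiv.Perm (Fin n), z = y ∘ π := by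
  classical
  have hc : (univ.filter (fun i => z i = 1)).card = (univ.filter (fun i => y i = 1)).card := by
    rw [← wt_eq_card, ← wt_eq_card, h]
  have hc' : (univ.filter (fun i => ¬ z i = 1)).card = (univ.filter (fun i => ¬ y i = 1)).card := by
    have h1 := Finset.card_filter_add_card_filter_not
      (s := (univ : Finset (Fin n))) (p := fun i => z i = 1)
    have h2 := Finset.card_filter_add_card_filter_not
      (s := (univ : Finset (Fin n))) (p := fun i => y i = 1)
    omega
  have e1 : {i // z i = 1} ≃ {i // y i = 1} := by
    apply Fintype.equivOfCardEq
    rw [Fintype.card_subtype, Fintype.card_subtype]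
    exact hc
  have e2 : {i // ¬ z i = 1} ≃ {i // ¬ y i = 1} := by
    apply Fintype.equivOfCardEq
    rw [Fintype.card_subtype, Fintype.card_subtype]
    exact hc'
  refine ⟨Equiv.subtypeCongr e1 e2, ?_⟩
  funext i
  simp only [Function.comp_apply]
  by_cases hi : z i = 1
  · have : (Equiv.subtypeCongr e1 e2) i = (e1 ⟨i, hi⟩ : Fin n) := by
      simp [Equiv.subtypeCongr, Equiv.sumCompl, hi]
    rw [this, hi]
    exact ((e1 ⟨i, hi⟩).2).symm
  · have : (Equiv.subtypeCongr e1 e2) i = (e2 ⟨i, hi⟩ : Fin n) := by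
      simp [Equiv.subtypeCongr, Equiv.sumCompl, hi]
    rw [this]
    have h2 := (e2 ⟨i, hi⟩).2
    rcases fin2_cases (z i) with h | h
    · rcases fin2_cases (y (e2 ⟨i, hi⟩)) with h' | h' <;> simp_all
    · exact absurd h hi

lemma phase_avg (N : ℕ) (hN : 0 < N) (c : ℕ → ℂ) :
    ∑ j ∈ range N, ((∑ k ∈ range N, Complex.exp (-(Complex.I * (2*Real.pi*j/N)) * k) * c k) *
      (starRingEnd ℂ) (∑ l ∈ range N, Complex.exp (-(Complex.I * (2*Real.pi*j/N)) * l) * c l))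
    = N * ∑ k ∈ range N, c k * (starRingEnd ℂ) (c k) := by
  have hconj : ∀ (w : ℂ), (starRingEnd ℂ) w = w → ∀ l : ℕ, (starRingEnd ℂ) (Complex.exp (-(Complex.I * w) * l))
      = Complex.exp ((Complex.I * w) * l) := by
    intro w hw l
    rw [← Complex.exp_conj]
    congr 1
    simp only [map_mul, map_neg, Complex.conj_I, Complex.conj_natCast, hw]
    ring
  have hwreal : ∀ j : ℕ, (starRingEnd ℂ) ((2 * Real.pi * j / N : ℝ) : ℂ) = ((2 * Real.pi * j / N : ℝ) : ℂ) :=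
    fun j => Complex.conj_ofReal _
  have key : ∀ k ∈ range N, ∀ l ∈ range N,
      ∑ j ∈ range N, Complex.exp (-(Complex.I * (2*Real.pi*j/N)) * k)
        * Complex.exp ((Complex.I * (2*Real.pi*j/N)) * l) = if k = l then (N:ℂ) else 0 := by
    intro k hk l hl
    have hmerge : ∀ j : ℕ, Complex.exp (-(Complex.I * (2*Real.pi*j/N)) * k)
        * Complex.exp ((Complex.I * (2*Real.pi*j/N)) * l)
        = Complex.exp (Complex.I * (2 * Real.pi * j / N) * (((l:ℤ) - (k:ℤ)) : ℂ)) := by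
      intro j
      rw [← Complex.exp_add]
      congr 1
      push_cast
      ring
    simp only [hmerge]
    by_cases hkl : k = l
    · subst hkl
      simp
    · rw [if_neg hkl]
      have := phase_sum N hN ((l:ℤ) - (k:ℤ)) (by omega) (by
        simp only [Finset.mem_range] at hk hl; omega)
      convert this using 2 with j
      push_cast
      ring_nf
  calc ∑ j ∈ range N, ((∑ k ∈ range N, Complex.exp (-(Complex.I * (2*Real.pi*j/N)) * k) * c k) *
      (starRingEnd ℂ) (∑ l ∈ range N, Complex.exp (-(Complex.I * (2*Real.pi*j/N)) * l) * c l))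
      = ∑ k ∈ range N, ∑ l ∈ range N, (∑ j ∈ range N,
          Complex.exp (-(Complex.I * (2*Real.pi*j/N)) * k)
          * Complex.exp ((Complex.I * (2*Real.pi*j/N)) * l)) * (c k * (starRingEnd ℂ) (c l)) := by
        have hj : ∀ j : ℕ, ((∑ k ∈ range N, Complex.exp (-(Complex.I * (2*Real.pi*j/N)) * k) * c k) *
            (starRingEnd ℂ) (∑ l ∈ range N, Complex.exp (-(Complex.I * (2*Real.pi*j/N)) * l) * c l))
            = ∑ k ∈ range N, ∑ l ∈ range N,
              (Complex.exp (-(Complex.I * (2*Real.pi*j/N)) * k)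
                * Complex.exp ((Complex.I * (2*Real.pi*j/N)) * l)) * (c k * (starRingEnd ℂ) (c l)) := by
          intro j
          rw [map_sum, Finset.sum_mul_sum]
          refine Finset.sum_congr rfl fun k _ => Finset.sum_congr rfl fun l _ => ?_
          rw [map_mul, hconj (2*(Real.pi:ℂ)*j/N) (by
            simp only [map_div₀, map_mul, Complex.conj_ofReal, Complex.conj_natCast, map_ofNat]) l]
          ring
        simp only [hj]
        rw [Finset.sum_comm]
        refine Finset.sum_congr rfl fun k _ => ?_
        rw [Finset.sum_comm]
        refine Finset.sum_congr rfl fun l _ => ?_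
        rw [Finset.sum_mul]
    _ = ∑ k ∈ range N, (N:ℂ) * (c k * (starRingEnd ℂ) (c k)) := by
        refine Finset.sum_congr rfl fun k hk => ?_
        rw [Finset.sum_eq_single k]
        · rw [key k hk k hk, if_pos rfl]
        · intro l hl hlk
          rw [key k hk l hl, if_neg (Ne.symm hlk), zero_mul]
        · intro h; exact absurd hk h
    _ = N * ∑ k ∈ range N, c k * (starRingEnd ℂ) (c k) := by rw [Finset.mul_sum]

lemma prod_fin2 {n : ℕ} (h : Fin 2 → ℂ) (y : Fin n → Fin 2) :
    ∏ i, h (y i) = h 0 ^ (n - ∑ i, ((y i : ℕ))) * h 1 ^ (∑ i, ((y i : ℕ))) := by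
  rw [← Finset.prod_filter_mul_prod_filter_not univ (fun i => y i = 1)]
  have h1 : ∏ i ∈ univ.filter (fun i => y i = 1), h (y i) = h 1 ^ (∑ i, ((y i : ℕ))) := by
    rw [wt_eq_card, ← Finset.prod_const]
    exact Finset.prod_congr rfl fun i hi => by rw [(Finset.mem_filter.1 hi).2]
  have h0 : ∏ i ∈ univ.filter (fun i => ¬ y i = 1), h (y i) = h 0 ^ (n - ∑ i, ((y i : ℕ))) := by
    have hcard : (univ.filter (fun i => ¬ y i = 1)).card = n - ∑ i, ((y i : ℕ)) := by
      have := Finset.card_filter_add_card_filter_not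
        (s := (univ : Finset (Fin n))) (p := fun i => y i = 1)
      simp only [Finset.card_univ, Fintype.card_fin] at this
      rw [wt_eq_card]
      omega
    rw [← hcard, ← Finset.prod_const]
    refine Finset.prod_congr rfl fun i hi => ?_
    have := (Finset.mem_filter.1 hi).2
    rcases fin2_cases (y i) with hh | hh
    · rw [hh]
    · exact absurd hh this
  rw [h1, h0, mul_comm]

noncomputable def gdef (x φ : ℝ) : Fin 2 → ℂ :=
  fun i => if i = 0 then ((Real.sqrt (1-x) : ℝ) : ℂ)
           else Complex.exp (Complex.I * φ) * ((Real.sqrt x : ℝ) : ℂ)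

noncomputable def Sk (n : ℕ) (ψ : (Fin n → Fin 2) → ℂ) (k : ℕ) : ℂ :=
  ∑ y ∈ univ.filter (fun y : Fin n → Fin 2 => (∑ i, ((y i : ℕ))) = k), ψ y

lemma overlap_expand {n : ℕ} (ψ : (Fin n → Fin 2) → ℂ) (h : Fin 2 → ℂ) :
    overlap (symmPow n h) ψ = ∑ k ∈ range (n+1),
      ((starRingEnd ℂ) (h 0)) ^ (n - k) * ((starRingEnd ℂ) (h 1)) ^ k
        * ∑ y ∈ univ.filter (fun y : Fin n → Fin 2 => ∑ i, ((y i : ℕ)) = k), ψ y := by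
  unfold overlap symmPow
  have hterm : ∀ y : Fin n → Fin 2, (starRingEnd ℂ) (∏ i, h (y i)) * ψ y
      = ((starRingEnd ℂ) (h 0)) ^ (n - ∑ i, ((y i : ℕ))) * ((starRingEnd ℂ) (h 1)) ^ (∑ i, ((y i : ℕ))) * ψ y := by
    intro y
    rw [map_prod]
    rw [prod_fin2 (fun b => (starRingEnd ℂ) (h b)) y]
  simp only [hterm]
  rw [← Finset.sum_fiberwise_of_maps_to (g := fun y : Fin n → Fin 2 => ∑ i, ((y i : ℕ)))
    (t := range (n+1)) (fun y _ => Finset.mem_range.2 (Nat.lt_succ_of_le (wt_le y)))]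
  refine Finset.sum_congr rfl fun k _ => ?_
  rw [Finset.mul_sum]
  refine Finset.sum_congr rfl fun y hy => ?_
  have := (Finset.mem_filter.1 hy).2
  rw [this]

lemma step_pointwise (n : ℕ) (ψ : (Fin n → Fin 2) → ℂ) (x : ℝ) (hx0 : 0 ≤ x) (hx1 : x ≤ 1) :
    ∑ j ∈ range (n+1),
      ‖overlap (symmPow n (gdef x (2*Real.pi*j/(n+1)))) ψ‖ ^ 2
    = (n+1) * ∑ k ∈ range (n+1), x^k * (1-x)^(n-k) * Complex.normSq (Sk n ψ k) := by
  set c : ℕ → ℂ := fun k =>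
    ((Real.sqrt (1-x) : ℝ) : ℂ) ^ (n-k) * ((Real.sqrt x : ℝ) : ℂ) ^ k * Sk n ψ k with hc
  have hovl : ∀ j : ℕ, overlap (symmPow n (gdef x (2*Real.pi*j/(n+1)))) ψ
      = ∑ k ∈ range (n+1),
        Complex.exp (-(Complex.I * (2*Real.pi*j/((n:ℕ)+1:ℕ))) * k) * c k := by
    intro j
    rw [overlap_expand]
    refine Finset.sum_congr rfl fun k _ => ?_
    have h0 : (starRingEnd ℂ) (gdef x (2*Real.pi*j/(n+1)) 0) = ((Real.sqrt (1-x) : ℝ) : ℂ) := by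
      simp [gdef, Complex.conj_ofReal]
    have h1 : (starRingEnd ℂ) (gdef x (2*Real.pi*j/(n+1)) 1)
        = Complex.exp (-(Complex.I * ((2*Real.pi*j/(n+1) : ℝ):ℂ))) * ((Real.sqrt x : ℝ) : ℂ) := by
      simp only [gdef]
      rw [if_neg (by decide)]
      rw [map_mul, ← Complex.exp_conj]
      congr 1
      · congr 1
        simp [map_mul, map_div₀, map_ofNat, Complex.conj_I, Complex.conj_ofReal, Complex.conj_natCast]
      · exact Complex.conj_ofReal _
    rw [h0, h1, mul_pow, ← Complex.exp_nat_mul]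
    rw [hc]
    have hcast : ((2*Real.pi*j/(n+1) : ℝ) : ℂ) = 2*(Real.pi:ℂ)*j/(((n:ℕ)+1:ℕ):ℂ) := by
      push_cast; ring
    rw [hcast]
    unfold Sk
    ring_nf
  have hdiag : ∀ k : ℕ, c k * (starRingEnd ℂ) (c k)
      = ((x^k * (1-x)^(n-k) * Complex.normSq (Sk n ψ k) : ℝ) : ℂ) := by
    intro k
    rw [hc]
    simp only [map_mul, map_pow, Complex.conj_ofReal]
    have hxx : ((Real.sqrt x : ℝ) : ℂ)^k * ((Real.sqrt x : ℝ) : ℂ)^k = ((x^k : ℝ) : ℂ) := by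
      rw [← mul_pow, ← Complex.ofReal_mul, Real.mul_self_sqrt hx0, Complex.ofReal_pow]
    have hyy : ((Real.sqrt (1-x) : ℝ) : ℂ)^(n-k) * ((Real.sqrt (1-x) : ℝ) : ℂ)^(n-k)
        = (((1-x)^(n-k) : ℝ) : ℂ) := by
      rw [← mul_pow, ← Complex.ofReal_mul, Real.mul_self_sqrt (by linarith), Complex.ofReal_pow]
    calc _ = (((Real.sqrt (1-x) : ℝ) : ℂ)^(n-k) * ((Real.sqrt (1-x) : ℝ) : ℂ)^(n-k))
          * (((Real.sqrt x : ℝ) : ℂ)^k * ((Real.sqrt x : ℝ) : ℂ)^k)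
          * (Sk n ψ k * (starRingEnd ℂ) (Sk n ψ k)) := by ring
      _ = _ := by
        rw [hxx, hyy, Complex.mul_conj]
        push_cast
        ring
  have key := phase_avg (n+1) (Nat.succ_pos n) c
  have hL : ((∑ j ∈ range (n+1),
      ‖overlap (symmPow n (gdef x (2*Real.pi*j/(n+1)))) ψ‖ ^ 2 : ℝ) : ℂ)
      = ((((n+1) * ∑ k ∈ range (n+1), x^k * (1-x)^(n-k) * Complex.normSq (Sk n ψ k) : ℝ)) : ℂ) := by
    have habs : ∀ z : ℂ, ((‖z‖ ^ 2 : ℝ) : ℂ) = z * (starRingEnd ℂ) z := by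
      intro z
      rw [Complex.sq_norm, Complex.mul_conj]
    calc ((∑ j ∈ range (n+1),
        ‖overlap (symmPow n (gdef x (2*Real.pi*j/(n+1)))) ψ‖ ^ 2 : ℝ) : ℂ)
        = ∑ j ∈ range (n+1), ((‖overlap (symmPow n (gdef x (2*Real.pi*j/(n+1)))) ψ‖ ^ 2 : ℝ) : ℂ) := by
          push_cast; rfl
      _ = ∑ j ∈ range (n+1), (overlap (symmPow n (gdef x (2*Real.pi*j/(n+1)))) ψ)
            * (starRingEnd ℂ) (overlap (symmPow n (gdef x (2*Real.pi*j/(n+1)))) ψ) :=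
          Finset.sum_congr rfl fun j _ => habs _
      _ = ((n+1:ℕ) : ℂ) * ∑ k ∈ range (n+1), c k * (starRingEnd ℂ) (c k) := by
          simp only [hovl]
          exact key
      _ = _ := by
          simp only [hdiag]
          push_cast
          ring
  exact_mod_cast hL

lemma step_integral (n : ℕ) (q : ℕ → ℝ) :
    (∫ x in (0:ℝ)..1, ((n+1 : ℝ) * ∑ k ∈ range (n+1), x^k * (1-x)^(n-k) * q k))
    = ∑ k ∈ range (n+1), q k / (n.choose k) := by
  have hint : ∀ k ∈ range (n+1), IntervalIntegrable
      (fun x : ℝ => x^k * (1-x)^(n-k) * q k) MeasureTheory.volume 0 1 := by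
    intro k _
    apply Continuous.intervalIntegrable
    continuity
  rw [intervalIntegral.integral_const_mul, intervalIntegral.integral_finset_sum hint,
    Finset.mul_sum]
  refine Finset.sum_congr rfl fun k hk => ?_
  have hk' : k ≤ n := by simp only [Finset.mem_range] at hk; omega
  rw [intervalIntegral.integral_mul_const, beta_nat k (n-k)]
  have hkn : k + (n - k) + 1 = n + 1 := by omega
  rw [hkn]
  have hch : (n.choose k : ℝ) * (k.factorial * (n-k).factorial) = n.factorial := by
    exact_mod_cast congrArg (Nat.cast : ℕ → ℝ)
      (by rw [← mul_assoc]; exact Nat.choose_mul_factorial_mul_factorial hk')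
  have hfac : ((n+1).factorial : ℝ) = (n+1) * n.factorial := by
    rw [Nat.factorial_succ]; push_cast; ring
  have hch0 : (n.choose k : ℝ) ≠ 0 := by
    exact_mod_cast (Nat.choose_pos hk').ne'
  have hnf0 : (n.factorial : ℝ) ≠ 0 := by exact_mod_cast n.factorial_ne_zero
  rw [hfac]
  field_simp
  linear_combination q k * hch

lemma overlap_le_one {n : ℕ} (ψ : (Fin n → Fin 2) → ℂ)
    (hunit : ∑ x, ‖ψ x‖ ^ 2 = 1)
    (σ : Fin n → Fin 2 → ℂ) (hσ : ∀ j, qubitUnit (σ j)) :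
    ‖overlap (prodState σ) ψ‖ ^ 2 ≤ 1 := by
  have habs : ‖overlap (prodState σ) ψ‖
      ≤ ∑ x : Fin n → Fin 2, ‖prodState σ x‖ * ‖ψ x‖ := by
    unfold overlap
    refine (norm_sum_le _ _).trans ?_
    apply le_of_eq
    refine Finset.sum_congr rfl fun x _ => ?_
    rw [norm_mul, Complex.norm_conj]
  have hCS := Finset.sum_mul_sq_le_sq_mul_sq Finset.univ
    (fun x : Fin n → Fin 2 => ‖prodState σ x‖) (fun x => ‖ψ x‖)
  have hprod : ∑ x : Fin n → Fin 2, ‖prodState σ x‖ ^ 2 = 1 := by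
    have : ∀ x : Fin n → Fin 2, ‖prodState σ x‖ ^ 2
        = ∏ j, ‖σ j (x j)‖ ^ 2 := by
      intro x
      unfold prodState
      rw [norm_prod]
      rw [← Finset.prod_pow]
    simp only [this]
    rw [← Fintype.piFinset_univ, ← Finset.prod_univ_sum (fun _ => (univ : Finset (Fin 2)))
       (fun j b => ‖σ j b‖ ^ 2)]
    rw [Finset.prod_eq_one]
    intro j _
    rw [Fin.sum_univ_two]
    exact hσ j
  calc ‖overlap (prodState σ) ψ‖ ^ 2
      ≤ (∑ x : Fin n → Fin 2, ‖prodState σ x‖ * ‖ψ x‖) ^ 2 := by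
        apply pow_le_pow_left₀ (norm_nonneg _) habs 2
    _ ≤ (∑ x : Fin n → Fin 2, ‖prodState σ x‖ ^ 2) * ∑ x, ‖ψ x‖ ^ 2 := hCS
    _ = 1 := by rw [hprod, hunit, one_mul]

lemma qubitUnit_gdef (x φ : ℝ) (hx0 : 0 ≤ x) (hx1 : x ≤ 1) : qubitUnit (gdef x φ) := by
  unfold qubitUnit gdef
  rw [if_neg (show (1 : Fin 2) ≠ 0 by decide), if_pos rfl]
  rw [norm_mul, Complex.norm_exp, Complex.norm_real, Complex.norm_real, Real.norm_eq_abs, Real.norm_eq_abs]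
  have : (Complex.I * (φ:ℂ)).re = 0 := by simp
  rw [this, Real.exp_zero, one_mul]
  rw [abs_of_nonneg (Real.sqrt_nonneg _), abs_of_nonneg (Real.sqrt_nonneg _)]
  rw [Real.sq_sqrt (by linarith), Real.sq_sqrt (by linarith)]
  ring

lemma Sk_collapse {n : ℕ} (ψ : (Fin n → Fin 2) → ℂ)
    (hsym : ∀ π : Equiv.Perm (Fin n), ∀ x, ψ (x ∘ π) = ψ x) (k : ℕ) :
    Complex.normSq (Sk n ψ k) / (n.choose k)
      = ∑ y ∈ univ.filter (fun y : Fin n → Fin 2 => (∑ i, ((y i : ℕ))) = k),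
          Complex.normSq (ψ y) := by
  classical
  set fib := univ.filter (fun y : Fin n → Fin 2 => (∑ i, ((y i : ℕ))) = k) with hfib
  rcases fib.eq_empty_or_nonempty with he | ⟨y₀, hy₀⟩
  · rw [Sk, ← hfib, he]
    simp
  · have hconst : ∀ y ∈ fib, ψ y = ψ y₀ := by
      intro y hy
      have h1 := (Finset.mem_filter.1 hy).2
      have h2 := (Finset.mem_filter.1 hy₀).2
      obtain ⟨π, hπ⟩ := orbit_perm y₀ y (by rw [h2, h1])
      rw [hπ]
      exact hsym π y₀
    have hS : Sk n ψ k = ((fib.card : ℝ) : ℂ) * ψ y₀ := by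
      rw [Sk, ← hfib, Finset.sum_congr rfl hconst, Finset.sum_const]
      push_cast
      rw [nsmul_eq_mul]
    have hT : ∑ y ∈ fib, Complex.normSq (ψ y) = fib.card * Complex.normSq (ψ y₀) := by
      rw [Finset.sum_congr rfl (fun y hy => by rw [hconst y hy]), Finset.sum_const,
        nsmul_eq_mul]
    have hcard : (fib.card : ℝ) = n.choose k := by exact_mod_cast card_wt k
    have hch0 : (n.choose k : ℝ) ≠ 0 := by
      rw [← hcard]
      exact_mod_cast Finset.card_ne_zero_of_mem hy₀
    rw [hS, hT, Complex.normSq_mul, hcard]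
    rw [div_eq_iff hch0]
    have : Complex.normSq (((n.choose k : ℝ) : ℂ)) = (n.choose k : ℝ)^2 := by
      rw [Complex.normSq_ofReal]; ring
    rw [this]
    ring

end Aux

theorem symmetric_entanglement_upper_bound
    (n : ℕ) (hn : 0 < n) (ψ : (Fin n → Fin 2) → ℂ)
    (hsym : ∀ π : Equiv.Perm (Fin n), ∀ x, ψ (x ∘ π) = ψ x)
    (hunit : ∑ x, ‖ψ x‖ ^ 2 = 1) :
    - Real.logb 2 (sSup {a : ℝ | ∃ σ : Fin n → Fin 2 → ℂ, (∀ j, qubitUnit (σ j)) ∧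
        a = ‖overlap (prodState σ) ψ‖ ^ 2})
      ≤ Real.logb 2 ((n : ℝ) + 1) := by
  classical
  set SetA := {a : ℝ | ∃ σ : Fin n → Fin 2 → ℂ, (∀ j, qubitUnit (σ j)) ∧
        a = ‖overlap (prodState σ) ψ‖ ^ 2} with hSetA
  set q : ℕ → ℝ := fun k => Complex.normSq (Sk n ψ k) with hq
  -- the integral of the phase-averaged overlap equals 1
  have hfibsum : ∑ k ∈ range (n+1), q k / (n.choose k) = 1 := by
    have h1 : ∀ k ∈ range (n+1), q k / (n.choose k)
        = ∑ y ∈ univ.filter (fun y : Fin n → Fin 2 => (∑ i, ((y i : ℕ))) = k),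
            Complex.normSq (ψ y) := fun k _ => Sk_collapse ψ hsym k
    rw [Finset.sum_congr rfl h1,
      Finset.sum_fiberwise_of_maps_to (g := fun y : Fin n → Fin 2 => ∑ i, ((y i : ℕ)))
        (fun y _ => Finset.mem_range.2 (Nat.lt_succ_of_le (wt_le y)))]
    rw [← hunit]
    exact Finset.sum_congr rfl fun y _ => (Complex.sq_norm _).symm
  have hP1 : (∫ x in (0:ℝ)..1, ((n+1 : ℝ) * ∑ k ∈ range (n+1), x^k * (1-x)^(n-k) * q k)) = 1 := by
    rw [step_integral]; exact hfibsum
  -- pick the maximizing amplitude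
  set P : ℝ → ℝ := fun x => (n+1 : ℝ) * ∑ k ∈ range (n+1), x^k * (1-x)^(n-k) * q k with hP
  have hPcont : Continuous P := by
    apply Continuous.mul continuous_const
    apply continuous_finset_sum
    intro k _
    fun_prop
  obtain ⟨x₀, hx₀mem, hx₀max⟩ := (isCompact_Icc (a := (0:ℝ)) (b := 1)).exists_isMaxOn
    (Set.nonempty_Icc.2 zero_le_one) hPcont.continuousOn
  have hPx₀ : 1 ≤ P x₀ := by
    rw [← hP1]
    have hle : (∫ x in (0:ℝ)..1, P x) ≤ ∫ _x in (0:ℝ)..1, P x₀ := by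
      apply intervalIntegral.integral_mono_on zero_le_one
        (hPcont.intervalIntegrable 0 1) (intervalIntegrable_const)
      exact fun x hx => hx₀max hx
    rw [intervalIntegral.integral_const, smul_eq_mul, sub_zero, one_mul] at hle
    exact hle
  -- find a good phase
  have hpt := step_pointwise n ψ x₀ hx₀mem.1 hx₀mem.2
  have hsum : ∑ j ∈ range (n+1), (1/((n:ℝ)+1))
      ≤ ∑ j ∈ range (n+1),
        ‖overlap (symmPow n (gdef x₀ (2*Real.pi*j/(n+1)))) ψ‖ ^ 2 := by
    rw [hpt, Finset.sum_const, Finset.card_range, nsmul_eq_mul]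
    push_cast
    rw [mul_one_div, div_self (by positivity)]
    exact hPx₀
  obtain ⟨j, _hj, hjle⟩ := Finset.exists_le_of_sum_le ⟨0, Finset.mem_range.2 (Nat.succ_pos n)⟩ hsum
  -- membership and boundedness
  have hmem : ‖overlap (symmPow n (gdef x₀ (2*Real.pi*j/(n+1)))) ψ‖ ^ 2 ∈ SetA := by
    refine ⟨fun _ => gdef x₀ (2*Real.pi*j/(n+1)),
      fun _ => qubitUnit_gdef _ _ hx₀mem.1 hx₀mem.2, rfl⟩
  have hbdd : BddAbove SetA := by
    refine ⟨1, fun a ha => ?_⟩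
    obtain ⟨σ, hσ, rfl⟩ := ha
    exact overlap_le_one ψ hunit σ hσ
  have hsup : 1/((n:ℝ)+1) ≤ sSup SetA := le_trans hjle (le_csSup hbdd hmem)
  have hpos : (0:ℝ) < 1/((n:ℝ)+1) := by positivity
  have hs0 : 0 < sSup SetA := lt_of_lt_of_le hpos hsup
  -- conclude via logb
  have hinv : (sSup SetA)⁻¹ ≤ (n:ℝ) + 1 := by
    rw [one_div] at hsup
    calc (sSup SetA)⁻¹ ≤ (((n:ℝ)+1)⁻¹)⁻¹ := by
          apply inv_anti₀ (by positivity) hsup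
      _ = (n:ℝ) + 1 := inv_inv _
  calc - Real.logb 2 (sSup SetA) = Real.logb 2 (sSup SetA)⁻¹ := (Real.logb_inv _ _).symm
    _ ≤ Real.logb 2 ((n:ℝ)+1) :=
        Real.logb_le_logb_of_le one_lt_two (inv_pos.2 hs0) hinv
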